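/- Let E be a real vector space, b a symmetric positive semidefinite bilinear form on E, and for each n ∈ ℕ let a_n be a symmetric positive semidefinite bilinear form on E and V_n ⊆ E a linear subspace. Let λ > 0 and u ∈ E with b(u,u) = 1 and a_n(u,u) = λ for all n. For each n let u_n ∈ V_n and λ_n ≥ 0 satisfy b(u_n,u_n) = 1 and a_n(u_n, v) = λ_n·b(u_n, v) for all v ∈ V_n, and let Π_n ∈ V_n satisfy a_n(u − Π_n, u_n) = 0. Let (h_n) be a sequence of positive reals with h_n → 0, and suppose there exist constants C > 0, c > 0 and exponents s, S, Δs, ΔS with 0 < s ≤ S ≤ 1, Δs > 0, ΔS > 0 such that for all n: (i) b(u − u_n, u − u_n) ≤ C·h_n^{4s}; (ii) b(u,u) − b(Π_n, Π_n) ≤ C·h_n^{2s+Δs}; (iii) b(u − Π_n, u − Π_n) ≤ C·h_n^{2(S+ΔS)}; (iv) c·h_n^{2s} ≤ a_n(u − u_n, u − u_n); and (v) λ_n ≤ C. Then there exists N ∈ ℕ such that λ_n ≤ λ for all n ≥ N. -/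

import Mathlib

private lemma eventual_lower_bound_aux (C c P x1 x2 x3 y : ℝ)
    (hC : 0 < C) (hP : 0 < P)
    (hx1 : x1 ≤ y) (hx2 : x2 ≤ y) (hx3 : x3 ≤ y)
    (hnm : y ≤ c / (5 * C ^ 2)) :
    C * (2 * (C * (P * x1)) + 2 * (C * (P * x2)) + C * (P * x3)) ≤ c * P := by
  have h5y : 2 * x1 + 2 * x2 + x3 ≤ 5 * y := by linarith
  have k1 : C ^ 2 * P * (2 * x1 + 2 * x2 + x3) ≤ C ^ 2 * P * (5 * y) :=
    mul_le_mul_of_nonneg_left h5y (by positivity)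
  have k2 : C ^ 2 * P * (5 * y) ≤ C ^ 2 * P * (5 * (c / (5 * C ^ 2))) :=
    mul_le_mul_of_nonneg_left (by linarith) (by positivity)
  have k3 : C ^ 2 * P * (5 * (c / (5 * C ^ 2))) = c * P := by
    field_simp
  have k4 : C * (2 * (C * (P * x1)) + 2 * (C * (P * x2)) + C * (P * x3))
      = C ^ 2 * P * (2 * x1 + 2 * x2 + x3) := by ring
  linarith

/-- Abstract form of Theorem 4.1: under the error estimate (i), the (H4) estimates
(ii)–(iii), the saturation condition (iv) and the uniform bound (v), the discrete
eigenvalues eventually lie below the exact eigenvalue. -/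
theorem eventual_lower_bound_for_eigenvalues
    {E : Type*} [AddCommGroup E] [Module ℝ E]
    (b : E →ₗ[ℝ] E →ₗ[ℝ] ℝ)
    (hb_symm : ∀ x y, b x y = b y x) (hb_pos : ∀ x, 0 ≤ b x x)
    (a : ℕ → E →ₗ[ℝ] E →ₗ[ℝ] ℝ)
    (ha_symm : ∀ n x y, a n x y = a n y x) (ha_pos : ∀ n x, 0 ≤ a n x x)
    (V : ℕ → Submodule ℝ E)
    (lam : ℝ) (hlam : 0 < lam) (u : E)
    (hu_norm : b u u = 1) (hu_energy : ∀ n, a n u u = lam)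
    (uN : ℕ → E) (lamN : ℕ → ℝ) (PiN : ℕ → E)
    (huN : ∀ n, uN n ∈ V n) (hlamN : ∀ n, 0 ≤ lamN n)
    (huN_norm : ∀ n, b (uN n) (uN n) = 1)
    (huN_eig : ∀ n, ∀ v ∈ V n, a n (uN n) v = lamN n * b (uN n) v)
    (hPiN : ∀ n, PiN n ∈ V n)
    (horth : ∀ n, a n (u - PiN n) (uN n) = 0)
    (h : ℕ → ℝ) (hh_pos : ∀ n, 0 < h n)
    (hh_lim : Filter.Tendsto h Filter.atTop (nhds 0))
    (C c s S Δs ΔS : ℝ) (hC : 0 < C) (hc : 0 < c)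
    (hs : 0 < s) (hsS : s ≤ S) (hS : S ≤ 1) (hΔs : 0 < Δs) (hΔS : 0 < ΔS)
    (hi : ∀ n, b (u - uN n) (u - uN n) ≤ C * h n ^ (4 * s))
    (hii : ∀ n, b u u - b (PiN n) (PiN n) ≤ C * h n ^ (2 * s + Δs))
    (hiii : ∀ n, b (u - PiN n) (u - PiN n) ≤ C * h n ^ (2 * (S + ΔS)))
    (hiv : ∀ n, c * h n ^ (2 * s) ≤ a n (u - uN n) (u - uN n))
    (hv : ∀ n, lamN n ≤ C) :
    ∃ N : ℕ, ∀ n ≥ N, lamN n ≤ lam := by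
  set m := min (2*s) (min (2*(S+ΔS) - 2*s) Δs) with hm_def
  have hm0 : 0 < m := lt_min (by linarith) (lt_min (by nlinarith) hΔs)
  have hcC : 0 < c/(5*C^2) := by positivity
  have hδ0 : 0 < min 1 ((c/(5*C^2)) ^ (1/m)) :=
    lt_min one_pos (Real.rpow_pos_of_pos hcC _)
  have hev : ∀ᶠ n in Filter.atTop, h n < min 1 ((c/(5*C^2)) ^ (1/m)) :=
    hh_lim.eventually (gt_mem_nhds hδ0)
  obtain ⟨N, hN⟩ := Filter.eventually_atTop.mp hev
  refine ⟨N, fun n hn => ?_⟩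
  have hδn := hN n hn
  have hh0 := hh_pos n
  have hn1 : h n ≤ 1 := le_of_lt (lt_of_lt_of_le hδn (min_le_left _ _))
  have hnm : h n ^ m ≤ c/(5*C^2) := by
    calc h n ^ m ≤ ((c/(5*C^2)) ^ (1/m)) ^ m :=
          Real.rpow_le_rpow hh0.le
            (le_of_lt (lt_of_lt_of_le hδn (min_le_right _ _))) hm0.le
      _ = (c/(5*C^2)) ^ ((1/m)*m) := (Real.rpow_mul hcC.le _ _).symm
      _ = c/(5*C^2) := by rw [one_div_mul_cancel hm0.ne', Real.rpow_one]
  -- bilinear expansions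
  have hbexp : ∀ x y : E, b (x - y) (x - y) = b x x - 2 * b x y + b y y := by
    intro x y
    simp only [map_sub, LinearMap.sub_apply]
    rw [hb_symm y x]; ring
  have haexp : a n (u - uN n) (u - uN n)
      = a n u u - 2 * a n u (uN n) + a n (uN n) (uN n) := by
    simp only [map_sub, LinearMap.sub_apply]
    rw [ha_symm n (uN n) u]; ring
  have hcs : ∀ x y : E, 2 * b x y ≤ b x x + b y y := by
    intro x y
    have h1 := hb_pos (x - y)
    rw [hbexp x y] at h1
    linarith
  have haun : a n (uN n) (uN n) = lamN n := by
    rw [huN_eig n (uN n) (huN n), huN_norm n, mul_one]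
  have hq : a n u (uN n) = lamN n * b (uN n) (PiN n) := by
    have h1 := horth n
    simp only [map_sub, LinearMap.sub_apply] at h1
    have h3 : a n (PiN n) (uN n) = lamN n * b (uN n) (PiN n) := by
      rw [ha_symm n (PiN n) (uN n), huN_eig n (PiN n) (hPiN n)]
    linarith
  have hA : a n (u - uN n) (u - uN n)
      = lam - 2 * (lamN n * b (uN n) (PiN n)) + lamN n := by
    rw [haexp, hu_energy n, hq, haun]
  have hB1 : b (uN n - PiN n) (uN n - PiN n)
      = 1 - 2 * b (uN n) (PiN n) + b (PiN n) (PiN n) := by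
    rw [hbexp, huN_norm n]
  have key : lam - lamN n = a n (u - uN n) (u - uN n)
      - lamN n * (b (uN n - PiN n) (uN n - PiN n)
        + (b u u - b (PiN n) (PiN n))) := by
    rw [hA, hB1, hu_norm]; ring
  -- bound b (uN n - PiN n) (uN n - PiN n)
  have hsplit : b (uN n - PiN n) (uN n - PiN n)
      ≤ 2 * b (u - uN n) (u - uN n) + 2 * b (u - PiN n) (u - PiN n) := by
    have h1 : uN n - PiN n = (uN n - u) - (PiN n - u) := by abel
    have h2 : b (uN n - u) (uN n - u) = b (u - uN n) (u - uN n) := by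
      rw [hbexp, hbexp, hb_symm u (uN n)]; ring
    have h3 : b (PiN n - u) (PiN n - u) = b (u - PiN n) (u - PiN n) := by
      rw [hbexp, hbexp, hb_symm u (PiN n)]; ring
    have h7 : b (uN n - u) (u - PiN n) = - b (uN n - u) (PiN n - u) := by
      rw [show u - PiN n = -(PiN n - u) by abel, map_neg]
    have h5 := hcs (uN n - u) (u - PiN n)
    rw [h1, hbexp]
    linarith
  -- rpow splits
  have e1 : h n ^ (4*s) = h n ^ (2*s) * h n ^ (2*s) := by
    rw [← Real.rpow_add hh0]; congr 1; ring
  have e2 : h n ^ (2*(S+ΔS)) = h n ^ (2*s) * h n ^ (2*(S+ΔS) - 2*s) := by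
    rw [← Real.rpow_add hh0]; congr 1; ring
  have e3 : h n ^ (2*s+Δs) = h n ^ (2*s) * h n ^ Δs := by
    rw [← Real.rpow_add hh0]
  have hma : h n ^ (2*s) ≤ h n ^ m :=
    Real.rpow_le_rpow_of_exponent_ge hh0 hn1 (min_le_left _ _)
  have hmb : h n ^ (2*(S+ΔS) - 2*s) ≤ h n ^ m :=
    Real.rpow_le_rpow_of_exponent_ge hh0 hn1
      (le_trans (min_le_right _ _) (min_le_left _ _))
  have hmc : h n ^ Δs ≤ h n ^ m :=
    Real.rpow_le_rpow_of_exponent_ge hh0 hn1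
      (le_trans (min_le_right _ _) (min_le_right _ _))
  have hP0 : (0:ℝ) < h n ^ (2*s) := Real.rpow_pos_of_pos hh0 _
  have hT0 : (0:ℝ) ≤ 2*(C * h n ^ (4*s)) + 2*(C * h n ^ (2*(S+ΔS)))
      + C * h n ^ (2*s+Δs) := by
    have p1 : (0:ℝ) < C * h n ^ (4*s) := mul_pos hC (Real.rpow_pos_of_pos hh0 _)
    have p2 : (0:ℝ) < C * h n ^ (2*(S+ΔS)) := mul_pos hC (Real.rpow_pos_of_pos hh0 _)
    have p3 : (0:ℝ) < C * h n ^ (2*s+Δs) := mul_pos hC (Real.rpow_pos_of_pos hh0 _)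
    linarith
  have hTc : C * (2*(C * h n ^ (4*s)) + 2*(C * h n ^ (2*(S+ΔS)))
      + C * h n ^ (2*s+Δs)) ≤ c * h n ^ (2*s) := by
    rw [e1, e2, e3]
    exact eventual_lower_bound_aux C c (h n ^ (2*s)) (h n ^ (2*s))
      (h n ^ (2*(S+ΔS) - 2*s)) (h n ^ Δs) (h n ^ m) hC hP0 hma hmb hmc hnm
  have hstep1 : lamN n * (b (uN n - PiN n) (uN n - PiN n)
      + (b u u - b (PiN n) (PiN n)))
      ≤ C * (2*(C * h n ^ (4*s)) + 2*(C * h n ^ (2*(S+ΔS)))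
        + C * h n ^ (2*s+Δs)) := by
    have hX : b (uN n - PiN n) (uN n - PiN n) + (b u u - b (PiN n) (PiN n))
        ≤ 2*(C * h n ^ (4*s)) + 2*(C * h n ^ (2*(S+ΔS))) + C * h n ^ (2*s+Δs) := by
      have := hi n; have := hiii n; have := hii n
      linarith
    exact le_trans (mul_le_mul_of_nonneg_left hX (hlamN n))
      (mul_le_mul_of_nonneg_right (hv n) hT0)
  have := hiv n
  linarith
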